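/- arXiv:1505.03447 — 2 statements merged into one kernel-verified Lean document; each statement's English description precedes it below -/
import Mathlib

section
/- For m, n, r real with n > -1, (m+1)/2 > 0, r ≥ 0, and B > 0, the incomplete Toronto function satisfies the upper bound T_B(m,n,r) ≤ r^{2n-m+1} Γ((m+1)/2) · ₁F₁((m+1)/2; n+1; r²) / (Γ(n+1) · e^{r²}). -/
open MeasureTheory Real Filter

noncomputable def uGamma (a x : ℝ) : ℝ := ∫ t in Set.Ioi x, t ^ (a - 1) * Real.exp (-t)

noncomputable def lGamma (a x : ℝ) : ℝ := ∫ t in Set.Ioc 0 x, t ^ (a - 1) * Real.exp (-t)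

noncomputable def poch (x : ℝ) (l : ℕ) : ℝ := ∏ i ∈ Finset.range l, (x + i)

noncomputable def besselI (n x : ℝ) : ℝ :=
  ∑' l : ℕ, (x / 2) ^ (n + 2 * (l : ℝ)) / ((l.factorial : ℝ) * Real.Gamma (n + (l : ℝ) + 1))

noncomputable def oneF₁ (α β x : ℝ) : ℝ :=
  ∑' i : ℕ, (poch α i / poch β i) * x ^ i / (i.factorial : ℝ)

noncomputable def nuttallQ (m n a b : ℝ) : ℝ :=
  ∫ x in Set.Ioi b, x ^ m * Real.exp (-(x ^ 2 + a ^ 2) / 2) * besselI n (a * x)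

noncomputable def nQ (m n a b : ℝ) : ℝ := a ^ (-n) * nuttallQ m n a b

noncomputable def marcumQ (ν a b : ℝ) : ℝ :=
  a ^ (1 - ν) * ∫ x in Set.Ioi b, x ^ ν * Real.exp (-(x ^ 2 + a ^ 2) / 2) * besselI (ν - 1) (a * x)

noncomputable def toronto (B m n r : ℝ) : ℝ :=
  2 * r ^ (n - m + 1) * Real.exp (-r ^ 2) *
    ∫ t in Set.Ioo 0 B, t ^ (m - n) * Real.exp (-t ^ 2) * besselI n (2 * r * t)


lemma poch_succ (x : ℝ) (l : ℕ) : poch x (l + 1) = poch x l * (x + l) := by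
  simp [poch, Finset.prod_range_succ]

lemma poch_pos {x : ℝ} (hx : 0 < x) (l : ℕ) : 0 < poch x l := by
  refine Finset.prod_pos fun i _ => by positivity

lemma poch_one_eq (l : ℕ) : poch 1 l = (l.factorial : ℝ) := by
  induction l with
  | zero => simp [poch]
  | succ k ih => rw [poch_succ, ih, Nat.factorial_succ]; push_cast; ring

lemma Gamma_poch {x : ℝ} (hx : 0 < x) (l : ℕ) :
    Real.Gamma (x + l) = Real.Gamma x * poch x l := by
  induction l with
  | zero => simp [poch]
  | succ k ih =>
    have h1 : x + ((k : ℕ) + 1 : ℕ) = (x + k) + 1 := by push_cast; ring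
    have h2 : (0:ℝ) < x + k := by positivity
    rw [h1, Real.Gamma_add_one h2.ne', ih, poch_succ]
    ring

lemma summable_aux {α β y : ℝ} (hα : 0 < α) (hβ : 0 < β) (hy : 0 ≤ y) :
    Summable (fun l : ℕ => poch α l / poch β l * y ^ l / (l.factorial : ℝ)) := by
  refine summable_of_ratio_norm_eventually_le (r := 1/2) (by norm_num) ?_
  have hev : ∀ᶠ l : ℕ in atTop, (1:ℝ) ≤ l ∧ α ≤ l ∧ 4 * y ≤ l := by
    filter_upwards [eventually_ge_atTop (max 1 (max ⌈α⌉₊ ⌈(4*y)⌉₊))] with l hl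
    have h1 : (1:ℕ) ≤ l := le_trans (le_max_left _ _) hl
    have h2 : ⌈α⌉₊ ≤ l := le_trans (le_trans (le_max_left _ _) (le_max_right _ _)) hl
    have h3 : ⌈(4*y)⌉₊ ≤ l := le_trans (le_trans (le_max_right _ _) (le_max_right _ _)) hl
    exact ⟨by exact_mod_cast h1,
      le_trans (Nat.le_ceil α) (by exact_mod_cast h2),
      le_trans (Nat.le_ceil _) (by exact_mod_cast h3)⟩
  filter_upwards [hev] with l ⟨hl1, hlα, hly⟩
  have hpβ := poch_pos hβ l
  have hfac : (0:ℝ) < (l.factorial : ℝ) := by exact_mod_cast l.factorial_pos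
  have hrec : poch α (l+1) / poch β (l+1) * y ^ (l+1) / ((l+1).factorial : ℝ)
      = (poch α l / poch β l * y ^ l / (l.factorial : ℝ)) * ((α + l) * y / ((β + l) * (l + 1))) := by
    rw [poch_succ, poch_succ, Nat.factorial_succ]
    push_cast
    field_simp
    ring
  rw [hrec, norm_mul]
  have hfact_nonneg : (0:ℝ) ≤ (α + l) * y / ((β + l) * (l + 1)) := by positivity
  have hfact_le : (α + l) * y / ((β + l) * (l + 1)) ≤ 1/2 := by
    rw [div_le_iff₀ (by positivity)]
    nlinarith [hy, hα.le, hβ.le, hl1, hlα, hly]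
  calc ‖poch α l / poch β l * y ^ l / (l.factorial : ℝ)‖ * ‖(α + l) * y / ((β + l) * (l + 1))‖
      = ‖poch α l / poch β l * y ^ l / (l.factorial : ℝ)‖ * ((α + l) * y / ((β + l) * (l + 1))) := by
        rw [Real.norm_of_nonneg hfact_nonneg]
    _ ≤ ‖poch α l / poch β l * y ^ l / (l.factorial : ℝ)‖ * (1/2) := by
        exact mul_le_mul_of_nonneg_left hfact_le (norm_nonneg _)
    _ = 1/2 * ‖poch α l / poch β l * y ^ l / (l.factorial : ℝ)‖ := by ring

lemma summable_aux2 {β z : ℝ} (hβ : 0 < β) (hz : 0 ≤ z) :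
    Summable (fun l : ℕ => z ^ l / ((l.factorial : ℝ) * poch β l)) := by
  have h := summable_aux (α := 1) one_pos hβ hz
  refine h.of_nonneg_of_le (fun l => ?_) (fun l => ?_)
  · have := poch_pos hβ l
    have hfac : (0:ℝ) < (l.factorial : ℝ) := by exact_mod_cast l.factorial_pos
    positivity
  · have hp := poch_pos hβ l
    have hfac : (1:ℝ) ≤ (l.factorial : ℝ) := by exact_mod_cast l.factorial_pos
    rw [poch_one_eq]
    have h1 : (l.factorial : ℝ) / poch β l * z ^ l / (l.factorial : ℝ) = z ^ l / poch β l := by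
      field_simp
    rw [h1]
    refine div_le_div_of_nonneg_left (by positivity) hp ?_
    nlinarith [pow_nonneg hz l]

lemma rpow_split {r : ℝ} (hr : 0 ≤ r) {n : ℝ} (hn : -1 < n) (l : ℕ) :
    r ^ (n + 2*(l:ℝ)) = r ^ n * (r^2) ^ l := by
  rcases hr.eq_or_lt with h | h
  · subst h
    by_cases hn0 : n = 0
    · subst hn0
      by_cases hl : l = 0
      · subst hl; norm_num
      · have h2 : 0 + 2*(l:ℝ) ≠ 0 := by
          simpa using Nat.cast_ne_zero (R := ℝ).mpr hl
        rw [Real.zero_rpow h2, Real.rpow_zero]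
        simp [zero_pow hl]
    · have hne : n + 2*(l:ℝ) ≠ 0 := by
        rcases Nat.eq_zero_or_pos l with hl | hl
        · simp [hl, hn0]
        · have : (1:ℝ) ≤ (l:ℝ) := by exact_mod_cast hl
          nlinarith
      rw [Real.zero_rpow hne, Real.zero_rpow hn0, zero_mul]
  · rw [Real.rpow_add h]
    congr 1
    have : (2 * (l:ℝ)) = ((2*l : ℕ) : ℝ) := by push_cast; ring
    rw [this, Real.rpow_natCast, pow_mul]

theorem stmt8 (m n r B : ℝ) (hn : -1 < n) (hm : 0 < (m + 1) / 2) (hr : 0 ≤ r) (hB : 0 < B) :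
    toronto B m n r ≤
      r ^ (2 * n - m + 1) * Real.Gamma ((m + 1) / 2) * oneF₁ ((m + 1) / 2) (n + 1) (r ^ 2) /
        (Real.Gamma (n + 1) * Real.exp (r ^ 2)) := by
  have hm1 : (-1:ℝ) < m := by linarith
  have hβ : (0:ℝ) < n + 1 := by linarith
  have hΓβ : 0 < Real.Gamma (n + 1) := Real.Gamma_pos_of_pos hβ
  have hΓα : 0 < Real.Gamma ((m + 1) / 2) := Real.Gamma_pos_of_pos hm
  have hexp2 : ∀ s : ℝ, s ^ (2:ℝ) = s ^ 2 := fun s => by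
    rw [show (2:ℝ) = ((2:ℕ):ℝ) by norm_num, Real.rpow_natCast]
  set F : ℕ → ℝ → ℝ := fun l t =>
    (r ^ (n + 2*(l:ℝ)) / ((l.factorial : ℝ) * Real.Gamma (n + (l:ℝ) + 1))) *
      (t ^ (m + 2*(l:ℝ)) * Real.exp (-t ^ (2:ℝ))) with hFdef
  have hΓl : ∀ l : ℕ, 0 < Real.Gamma (n + (l:ℝ) + 1) := fun l =>
    Real.Gamma_pos_of_pos (by have h0 : (0:ℝ) ≤ (l:ℝ) := Nat.cast_nonneg l; linarith)
  have hfacpos : ∀ l : ℕ, (0:ℝ) < (l.factorial : ℝ) := fun l => by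
    exact_mod_cast l.factorial_pos
  have hFnn : ∀ (l : ℕ) (t : ℝ), 0 ≤ t → 0 ≤ F l t := fun l t ht => by
    have h1 := hΓl l
    have h2 := Real.rpow_nonneg hr (n + 2*(l:ℝ))
    have h3 := Real.rpow_nonneg ht (m + 2*(l:ℝ))
    have h4 := hfacpos l
    have h5 := (Real.exp_pos (-t ^ (2:ℝ))).le
    simp only [hFdef]
    positivity
  have hFmeas : ∀ l : ℕ, Measurable (F l) := fun l => by
    simp only [hFdef]
    fun_prop
  have hexq : ∀ l : ℕ, (-1:ℝ) < m + 2*(l:ℝ) := fun l => by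
    have h0 : (0:ℝ) ≤ (l:ℝ) := Nat.cast_nonneg l; linarith
  have hFint : ∀ l : ℕ, IntegrableOn (F l) (Set.Ioi 0) := fun l => by
    exact ((integrableOn_rpow_mul_exp_neg_rpow (hexq l) (by norm_num)).const_mul _)
  set a : ℕ → ℝ := fun l =>
    (r ^ (n + 2*(l:ℝ)) / ((l.factorial : ℝ) * Real.Gamma (n + (l:ℝ) + 1))) *
      (1/2 * Real.Gamma ((m + 1)/2 + l)) with hadef
  have hFval : ∀ l : ℕ, ∫ t in Set.Ioi (0:ℝ), F l t = a l := fun l => by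
    simp only [hFdef, hadef]
    rw [MeasureTheory.integral_const_mul,
      integral_rpow_mul_exp_neg_rpow (by norm_num : (0:ℝ) < 2) (hexq l)]
    rw [show (m + 2*(l:ℝ) + 1) / 2 = (m+1)/2 + (l:ℝ) by ring]
  -- pointwise series expansion
  have hA : ∀ t : ℝ, 0 < t →
      t ^ (m - n) * Real.exp (-t ^ 2) * besselI n (2 * r * t) = ∑' l, F l t := by
    intro t ht
    have hb : besselI n (2 * r * t)
        = ∑' l : ℕ, (r * t) ^ (n + 2*(l:ℝ)) / ((l.factorial : ℝ) * Real.Gamma (n + (l:ℝ) + 1)) := by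
      unfold besselI
      refine tsum_congr fun l => by rw [show 2 * r * t / 2 = r * t by ring]
    rw [hb, ← tsum_mul_left]
    refine tsum_congr fun l => ?_
    rw [Real.mul_rpow hr ht.le]
    have key : t ^ (m + 2*(l:ℝ)) = t ^ (m - n) * t ^ (n + 2*(l:ℝ)) := by
      rw [← Real.rpow_add ht]; ring_nf
    simp only [hFdef]
    rw [key, hexp2 t]
    have h1 := (hΓl l).ne'
    have h2 := (hfacpos l).ne'
    field_simp
  -- uniform closed form for F l t
  have hFeq : ∀ (t : ℝ), 0 ≤ t → ∀ l : ℕ, F l t =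
      (r ^ n * t ^ m * Real.exp (-t ^ (2:ℝ)) / Real.Gamma (n+1)) *
        ((r^2 * t^2) ^ l / ((l.factorial : ℝ) * poch (n+1) l)) := by
    intro t ht l
    have hgam : Real.Gamma (n + (l:ℝ) + 1) = Real.Gamma (n+1) * poch (n+1) l := by
      rw [show n + (l:ℝ) + 1 = (n+1) + l by ring, Gamma_poch hβ]
    simp only [hFdef]
    rw [hgam, rpow_split hr hn l, rpow_split ht hm1 l, mul_pow]
    have h1 := (poch_pos hβ l).ne'
    have h2 := hΓβ.ne'
    have h3 := (hfacpos l).ne'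
    field_simp
  have hsum_t : ∀ t : ℝ, 0 ≤ t → Summable (fun l => F l t) := fun t ht => by
    refine ((summable_aux2 hβ (by positivity : (0:ℝ) ≤ r^2 * t^2)).mul_left
      (r ^ n * t ^ m * Real.exp (-t ^ (2:ℝ)) / Real.Gamma (n+1))).congr fun l => ?_
    rw [hFeq t ht l]
  -- summability and value of a
  have haeq : ∀ l : ℕ, a l = (Real.Gamma ((m+1)/2) * r ^ n / (2 * Real.Gamma (n+1))) *
      (poch ((m+1)/2) l / poch (n+1) l * (r^2) ^ l / (l.factorial : ℝ)) := fun l => by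
    have hgam : Real.Gamma (n + (l:ℝ) + 1) = Real.Gamma (n+1) * poch (n+1) l := by
      rw [show n + (l:ℝ) + 1 = (n+1) + l by ring, Gamma_poch hβ]
    simp only [hadef]
    rw [hgam, rpow_split hr hn l, Gamma_poch hm l]
    have h1 := (poch_pos hβ l).ne'
    have h2 := hΓβ.ne'
    have h3 := (hfacpos l).ne'
    have h4 := (poch_pos hm l).ne'
    field_simp
  have ha_nn : ∀ l : ℕ, 0 ≤ a l := fun l => by
    rw [haeq l]
    have h1 := (poch_pos hβ l).le
    have h2 := (poch_pos hm l).le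
    have h3 := (hfacpos l).le
    have h4 := Real.rpow_nonneg hr n
    positivity
  have ha_sum : Summable a :=
    ((summable_aux hm hβ (sq_nonneg r)).mul_left _).congr fun l => (haeq l).symm
  set S : ℝ := ∑' l, a l with hSdef
  have hS_nn : 0 ≤ S := tsum_nonneg ha_nn
  -- the Bochner integral over Ioo 0 B is at most S
  set f : ℝ → ℝ := fun t => t ^ (m - n) * Real.exp (-t ^ 2) * besselI n (2 * r * t) with hfdef
  have hG : Measurable (fun t => ∑' l, ENNReal.ofReal (F l t)) :=
    Measurable.ennreal_tsum fun l => (hFmeas l).ennreal_ofReal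
  have hptwise : ∀ t : ℝ, 0 < t →
      ENNReal.ofReal (f t) = ∑' l, ENNReal.ofReal (F l t) := fun t ht => by
    rw [hfdef]
    simp only
    rw [hA t ht, ENNReal.ofReal_tsum_of_nonneg (fun l => hFnn l t ht.le) (hsum_t t ht.le)]
  have hnn_ae : 0 ≤ᵐ[volume.restrict (Set.Ioo 0 B)] f := by
    filter_upwards [ae_restrict_mem measurableSet_Ioo] with t ht
    rw [hfdef]
    simp only
    rw [hA t ht.1]
    exact tsum_nonneg fun l => hFnn l t ht.1.le
  have hmeas_ae : AEStronglyMeasurable f (volume.restrict (Set.Ioo 0 B)) := by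
    have heq : (fun t => (∑' l, ENNReal.ofReal (F l t)).toReal)
        =ᵐ[volume.restrict (Set.Ioo 0 B)] f := by
      filter_upwards [ae_restrict_mem measurableSet_Ioo] with t ht
      rw [← hptwise t ht.1, ENNReal.toReal_ofReal]
      rw [hfdef]; simp only
      rw [hA t ht.1]
      exact tsum_nonneg fun l => hFnn l t ht.1.le
    exact (hG.ennreal_toReal.aestronglyMeasurable).congr heq
  have hIle : (∫ t in Set.Ioo 0 B, f t) ≤ S := by
    rw [MeasureTheory.integral_eq_lintegral_of_nonneg_ae hnn_ae hmeas_ae]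
    have hchain : (∫⁻ t in Set.Ioo 0 B, ENNReal.ofReal (f t)) ≤ ENNReal.ofReal S := by
      have hl1 : (∫⁻ t in Set.Ioo 0 B, ENNReal.ofReal (f t))
          = ∫⁻ t in Set.Ioo 0 B, ∑' l, ENNReal.ofReal (F l t) := by
        refine lintegral_congr_ae ?_
        filter_upwards [ae_restrict_mem measurableSet_Ioo] with t ht
        exact hptwise t ht.1
      have hl2 : (∫⁻ t in Set.Ioo 0 B, ∑' l, ENNReal.ofReal (F l t))
          ≤ ∫⁻ t in Set.Ioi 0, ∑' l, ENNReal.ofReal (F l t) :=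
        lintegral_mono_set Set.Ioo_subset_Ioi_self
      have hl3 : (∫⁻ t in Set.Ioi 0, ∑' l, ENNReal.ofReal (F l t))
          = ∑' l, ∫⁻ t in Set.Ioi 0, ENNReal.ofReal (F l t) :=
        lintegral_tsum fun l => ((hFmeas l).ennreal_ofReal).aemeasurable
      have hl4 : ∀ l : ℕ, (∫⁻ t in Set.Ioi 0, ENNReal.ofReal (F l t)) = ENNReal.ofReal (a l) := by
        intro l
        rw [← MeasureTheory.ofReal_integral_eq_lintegral_ofReal (hFint l)
          (by filter_upwards [ae_restrict_mem measurableSet_Ioi] with t ht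
              exact hFnn l t (le_of_lt ht)), hFval l]
      have hl5 : (∑' l, ENNReal.ofReal (a l)) = ENNReal.ofReal S :=
        (ENNReal.ofReal_tsum_of_nonneg ha_nn ha_sum).symm
      calc (∫⁻ t in Set.Ioo 0 B, ENNReal.ofReal (f t))
          = ∫⁻ t in Set.Ioo 0 B, ∑' l, ENNReal.ofReal (F l t) := hl1
        _ ≤ ∫⁻ t in Set.Ioi 0, ∑' l, ENNReal.ofReal (F l t) := hl2
        _ = ∑' l, ∫⁻ t in Set.Ioi 0, ENNReal.ofReal (F l t) := hl3
        _ = ∑' l, ENNReal.ofReal (a l) := tsum_congr hl4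
        _ = ENNReal.ofReal S := hl5
    calc (∫⁻ t in Set.Ioo 0 B, ENNReal.ofReal (f t)).toReal
        ≤ (ENNReal.ofReal S).toReal := ENNReal.toReal_mono ENNReal.ofReal_ne_top hchain
      _ = S := ENNReal.toReal_ofReal hS_nn
  -- sum S in closed form
  have hH_nn : 0 ≤ oneF₁ ((m + 1) / 2) (n + 1) (r ^ 2) := by
    refine tsum_nonneg fun i => ?_
    have h1 := (poch_pos hβ i).le
    have h2 := (poch_pos hm i).le
    have h3 := (hfacpos i).le
    positivity
  have hSval : S = (Real.Gamma ((m+1)/2) * r ^ n / (2 * Real.Gamma (n+1))) *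
      oneF₁ ((m + 1) / 2) (n + 1) (r ^ 2) := by
    rw [hSdef]
    unfold oneF₁
    rw [← tsum_mul_left]
    exact tsum_congr haeq
  -- final assembly
  have hPnn : (0:ℝ) ≤ 2 * r ^ (n - m + 1) * Real.exp (-r ^ 2) := by
    have := Real.rpow_nonneg hr (n - m + 1)
    positivity
  have hstep : toronto B m n r ≤ (2 * r ^ (n - m + 1) * Real.exp (-r ^ 2)) * S := by
    unfold toronto
    exact mul_le_mul_of_nonneg_left hIle hPnn
  have hrw : (2 * r ^ (n - m + 1) * Real.exp (-r ^ 2)) *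
      ((Real.Gamma ((m+1)/2) * r ^ n / (2 * Real.Gamma (n+1))) *
        oneF₁ ((m + 1) / 2) (n + 1) (r ^ 2))
      = (r ^ (n - m + 1) * r ^ n) *
        (Real.Gamma ((m+1)/2) * oneF₁ ((m + 1) / 2) (n + 1) (r ^ 2) /
          (Real.Gamma (n+1) * Real.exp (r ^ 2))) := by
    rw [Real.exp_neg]
    have h2 := hΓβ.ne'
    have h3 := (Real.exp_pos (r^2)).ne'
    field_simp
  have hrpow : r ^ (n - m + 1) * r ^ n ≤ r ^ (2 * n - m + 1) := by
    rcases hr.eq_or_lt with h | h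
    · subst h
      by_cases ha : n - m + 1 = 0
      · by_cases hb : n = 0
        · rw [ha, hb, show 2 * (0:ℝ) - m + 1 = 0 by rw [hb] at ha; linarith]
          simp
        · rw [Real.zero_rpow hb, mul_zero]
          exact Real.rpow_nonneg le_rfl _
      · rw [Real.zero_rpow ha, zero_mul]
        exact Real.rpow_nonneg le_rfl _
    · rw [← Real.rpow_add h]
      rw [show n - m + 1 + n = 2 * n - m + 1 by ring]
  have hQnn : 0 ≤ Real.Gamma ((m+1)/2) * oneF₁ ((m + 1) / 2) (n + 1) (r ^ 2) /
      (Real.Gamma (n+1) * Real.exp (r ^ 2)) := by positivity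
  calc toronto B m n r
      ≤ (2 * r ^ (n - m + 1) * Real.exp (-r ^ 2)) * S := hstep
    _ = (r ^ (n - m + 1) * r ^ n) *
        (Real.Gamma ((m+1)/2) * oneF₁ ((m + 1) / 2) (n + 1) (r ^ 2) /
          (Real.Gamma (n+1) * Real.exp (r ^ 2))) := by rw [hSval, hrw]
    _ ≤ r ^ (2 * n - m + 1) *
        (Real.Gamma ((m+1)/2) * oneF₁ ((m + 1) / 2) (n + 1) (r ^ 2) /
          (Real.Gamma (n+1) * Real.exp (r ^ 2))) :=
        mul_le_mul_of_nonneg_right hrpow hQnn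
    _ = r ^ (2 * n - m + 1) * Real.Gamma ((m + 1) / 2) * oneF₁ ((m + 1) / 2) (n + 1) (r ^ 2) /
        (Real.Gamma (n + 1) * Real.exp (r ^ 2)) := by ring
end

section
/- For reals a ≥ 0, b ≥ 0, and m, n with n > -1 and m+n+1 > 0, the truncation error ε_p = ∑_{l=p+1}^∞ a^{2l} e^{-a²/2} Γ((m+n+2l+1)/2, b²/2) / (l! Γ(n+l+1) 2^{(n-m+2l+1)/2}) of the Nuttall Q series is bounded above by ε_p ≤ Γ((m+n+1)/2) ₁F₁((m+n+1)/2; n+1; a²/2) / (Γ(n+1) 2^{(n-m+1)/2} e^{a²/2}) − ∑_{l=0}^p a^{2l} e^{-a²/2} Γ((m+n+2l+1)/2, b²/2) / (l! Γ(n+l+1) 2^{(n-m+2l+1)/2}). -/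
open MeasureTheory Real Filter

lemma poch_pos_s11 {s : ℝ} (hs : 0 < s) (l : ℕ) : 0 < poch s l :=
  Finset.prod_pos fun i _ => by positivity

lemma gamma_add_nat {s : ℝ} (hs : 0 < s) (l : ℕ) :
    Real.Gamma (s + l) = poch s l * Real.Gamma s := by
  induction l with
  | zero => simp [poch]
  | succ k ih =>
    have h1 : s + ((k+1 : ℕ) : ℝ) = (s + k) + 1 := by push_cast; ring
    have h2 : s + (k : ℝ) ≠ 0 := by positivity
    rw [h1, Real.Gamma_add_one h2, ih]
    simp only [poch, Finset.prod_range_succ]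
    ring

lemma uGamma_nonneg {s x : ℝ} (hx : 0 ≤ x) : 0 ≤ uGamma s x := by
  apply setIntegral_nonneg measurableSet_Ioi
  intro t ht
  have ht0 : 0 < t := lt_of_le_of_lt hx ht
  exact mul_nonneg (Real.rpow_nonneg ht0.le _) (Real.exp_pos _).le

lemma uGamma_le_Gamma {s x : ℝ} (hs : 0 < s) (hx : 0 ≤ x) :
    uGamma s x ≤ Real.Gamma s := by
  rw [Real.Gamma_eq_integral hs, uGamma]
  have hcong : ∀ t : ℝ, t ^ (s-1) * Real.exp (-t) = Real.exp (-t) * t ^ (s-1) :=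
    fun t => mul_comm _ _
  simp_rw [hcong]
  apply setIntegral_mono_set (Real.GammaIntegral_convergent hs)
  · filter_upwards [ae_restrict_mem measurableSet_Ioi] with t ht
    exact mul_nonneg (Real.exp_pos _).le (Real.rpow_nonneg (le_of_lt ht) _)
  · exact HasSubset.Subset.eventuallyLE (Set.Ioi_subset_Ioi hx)

lemma key (m n a : ℝ) (hn : -1 < n) (hmn : 0 < m + n + 1) (l : ℕ) :
    a ^ (2*l) * Real.Gamma ((m+n+2*(l:ℝ)+1)/2) /
      ((l.factorial : ℝ) * Real.Gamma (n+(l:ℝ)+1) * (2:ℝ) ^ ((n-m+2*(l:ℝ)+1)/2))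
    = Real.Gamma ((m+n+1)/2) / (Real.Gamma (n+1) * (2:ℝ)^((n-m+1)/2)) *
      (poch ((m+n+1)/2) l / poch (n+1) l * (a^2/2)^l / (l.factorial : ℝ)) := by
  have hα : 0 < (m+n+1)/2 := by linarith
  have hβ : 0 < n+1 := by linarith
  have e1 : (m+n+2*(l:ℝ)+1)/2 = (m+n+1)/2 + l := by ring
  have e2 : n+(l:ℝ)+1 = (n+1) + l := by ring
  have e3 : (n-m+2*(l:ℝ)+1)/2 = (n-m+1)/2 + l := by ring
  have e4 : (2:ℝ) ^ ((n-m+1)/2 + (l:ℝ)) = (2:ℝ)^((n-m+1)/2) * (2:ℝ)^(l:ℕ) := by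
    rw [Real.rpow_add two_pos, Real.rpow_natCast]
  have e5 : a ^ (2*l) = (a^2)^l := by rw [pow_mul]
  rw [e1, e2, e3, e4, e5, gamma_add_nat hα, gamma_add_nat hβ]
  have h1 := (poch_pos_s11 hα l).ne'
  have h2 := (poch_pos_s11 hβ l).ne'
  have h3 := (Real.Gamma_pos_of_pos hα).ne'
  have h4 := (Real.Gamma_pos_of_pos hβ).ne'
  have h5 : ((l.factorial : ℝ)) ≠ 0 := by positivity
  have h6 : (2:ℝ)^((n-m+1)/2) ≠ 0 := by positivity
  have h7 : ((2:ℝ)^(l:ℕ)) ≠ 0 := by positivity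
  rw [div_pow]
  field_simp

lemma hterm_summable (α β x : ℝ) (hα : 0 < α) (hβ : 0 < β) (hx : 0 ≤ x) :
    Summable (fun l : ℕ => poch α l / poch β l * x ^ l / (l.factorial : ℝ)) := by
  set K : ℝ := max 1 (α / β) with hK
  have hK1 : 1 ≤ K := le_max_left _ _
  have hK0 : 0 ≤ K := by linarith
  apply Summable.of_nonneg_of_le
  · intro l
    have := poch_pos_s11 hα l
    have := poch_pos_s11 hβ l
    positivity
  · intro l
    show poch α l / poch β l * x ^ l / (l.factorial : ℝ) ≤ (K*x)^l / (l.factorial : ℝ)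
    rw [mul_pow]
    have hratio : poch α l / poch β l ≤ K ^ l := by
      rw [div_le_iff₀ (poch_pos_s11 hβ l)]
      have : K ^ l * poch β l = ∏ i ∈ Finset.range l, (K * (β + i)) := by
        rw [Finset.prod_mul_distrib, Finset.prod_const, poch]
        simp [Finset.card_range]
      rw [this, poch]
      apply Finset.prod_le_prod
      · intro i _; positivity
      · intro i _
        have h1 : α ≤ K * β := by
          have : α / β ≤ K := le_max_right _ _
          calc α = (α / β) * β := by field_simp
          _ ≤ K * β := by nlinarith [hβ]
        have h2 : (i:ℝ) ≤ K * i := by nlinarith [Nat.cast_nonneg (α := ℝ) i]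
        nlinarith
    have hfac : (0:ℝ) < (l.factorial : ℝ) := by positivity
    exact div_le_div_of_nonneg_right (mul_le_mul_of_nonneg_right hratio (by positivity)) hfac.le
  · exact Real.summable_pow_div_factorial (K*x)

theorem stmt11 (m n a b : ℝ) (hn : -1 < n) (hmn : 0 < m + n + 1) (ha : 0 ≤ a) (hb : 0 ≤ b)
    (p : ℕ) :
    (∑' l : ℕ,
        a ^ (2 * (p + 1 + l)) * Real.exp (-a ^ 2 / 2) *
          uGamma ((m + n + 2 * ((p : ℝ) + 1 + (l : ℝ)) + 1) / 2) (b ^ 2 / 2) /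
          (((p + 1 + l).factorial : ℝ) * Real.Gamma (n + ((p : ℝ) + 1 + (l : ℝ)) + 1) *
            (2 : ℝ) ^ ((n - m + 2 * ((p : ℝ) + 1 + (l : ℝ)) + 1) / 2))) ≤
      Real.Gamma ((m + n + 1) / 2) * oneF₁ ((m + n + 1) / 2) (n + 1) (a ^ 2 / 2) /
          (Real.Gamma (n + 1) * (2 : ℝ) ^ ((n - m + 1) / 2) * Real.exp (a ^ 2 / 2)) -
        ∑ l ∈ Finset.range (p + 1),
          a ^ (2 * l) * Real.exp (-a ^ 2 / 2) *
            uGamma ((m + n + 2 * (l : ℝ) + 1) / 2) (b ^ 2 / 2) /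
            ((l.factorial : ℝ) * Real.Gamma (n + (l : ℝ) + 1) *
              (2 : ℝ) ^ ((n - m + 2 * (l : ℝ) + 1) / 2)) := by
  have hα : 0 < (m+n+1)/2 := by linarith
  have hβ : 0 < n+1 := by linarith
  have hB : (0:ℝ) ≤ b^2/2 := by positivity
  set f : ℕ → ℝ := fun l =>
    a ^ (2 * l) * Real.exp (-a ^ 2 / 2) *
      uGamma ((m + n + 2 * (l : ℝ) + 1) / 2) (b ^ 2 / 2) /
      ((l.factorial : ℝ) * Real.Gamma (n + (l : ℝ) + 1) *
        (2 : ℝ) ^ ((n - m + 2 * (l : ℝ) + 1) / 2)) with hf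
  set c : ℝ := Real.exp (-a ^ 2 / 2) *
      (Real.Gamma ((m+n+1)/2) / (Real.Gamma (n+1) * (2:ℝ)^((n-m+1)/2))) with hc
  set h : ℕ → ℝ := fun l =>
    poch ((m+n+1)/2) l / poch (n+1) l * (a^2/2)^l / (l.factorial : ℝ) with hh
  set g : ℕ → ℝ := fun l => c * h l with hg
  have hDpos : ∀ l : ℕ, (0:ℝ) <
      (l.factorial : ℝ) * Real.Gamma (n + (l : ℝ) + 1) *
        (2 : ℝ) ^ ((n - m + 2 * (l : ℝ) + 1) / 2) := by
    intro l
    have h1 : (0:ℝ) < n + (l:ℝ) + 1 := by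
      have : (0:ℝ) ≤ (l:ℝ) := Nat.cast_nonneg l
      linarith
    have h2 := Real.Gamma_pos_of_pos h1
    positivity
  have hf_nonneg : ∀ l, 0 ≤ f l := by
    intro l
    have h1 : 0 ≤ uGamma ((m + n + 2 * (l:ℝ) + 1) / 2) (b^2/2) := uGamma_nonneg hB
    have h2 := hDpos l
    simp only [hf]
    have h3 : (0:ℝ) ≤ a ^ (2*l) := by positivity
    positivity
  have hfg : ∀ l, f l ≤ g l := by
    intro l
    have hγ : 0 < (m+n+1)/2 + (l:ℝ) := by positivity
    have e1 : (m+n+2*(l:ℝ)+1)/2 = (m+n+1)/2 + (l:ℝ) := by ring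
    have hu : uGamma ((m + n + 2 * (l:ℝ) + 1) / 2) (b^2/2) ≤
        Real.Gamma ((m + n + 2 * (l:ℝ) + 1) / 2) := by
      rw [e1]; exact uGamma_le_Gamma hγ hB
    have step1 : f l ≤ a ^ (2 * l) * Real.exp (-a ^ 2 / 2) *
        Real.Gamma ((m + n + 2 * (l : ℝ) + 1) / 2) /
        ((l.factorial : ℝ) * Real.Gamma (n + (l : ℝ) + 1) *
          (2 : ℝ) ^ ((n - m + 2 * (l : ℝ) + 1) / 2)) := by
      simp only [hf]
      apply div_le_div_of_nonneg_right _ (hDpos l).le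
      rw [mul_assoc, mul_assoc]
      apply mul_le_mul_of_nonneg_left _ (by positivity : (0:ℝ) ≤ a ^ (2*l))
      exact mul_le_mul_of_nonneg_left hu (Real.exp_pos _).le
    refine step1.trans_eq ?_
    have hkey := key m n a hn hmn l
    calc a ^ (2 * l) * Real.exp (-a ^ 2 / 2) *
        Real.Gamma ((m + n + 2 * (l : ℝ) + 1) / 2) /
        ((l.factorial : ℝ) * Real.Gamma (n + (l : ℝ) + 1) *
          (2 : ℝ) ^ ((n - m + 2 * (l : ℝ) + 1) / 2))
        = Real.exp (-a ^ 2 / 2) * (a ^ (2*l) * Real.Gamma ((m+n+2*(l:ℝ)+1)/2) /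
          ((l.factorial : ℝ) * Real.Gamma (n+(l:ℝ)+1) *
            (2:ℝ) ^ ((n-m+2*(l:ℝ)+1)/2))) := by ring
      _ = g l := by rw [hkey, hg, hc, hh]; ring
  have hh_summ : Summable h := hterm_summable _ _ _ hα hβ (by positivity)
  have hg_summ : Summable g := hh_summ.mul_left c
  have hf_summ : Summable f := Summable.of_nonneg_of_le hf_nonneg hfg hg_summ
  have htsum_le : ∑' l, f l ≤ ∑' l, g l := Summable.tsum_le_tsum hfg hf_summ hg_summ
  have hgsum : ∑' l, g l =
      Real.Gamma ((m + n + 1) / 2) * oneF₁ ((m + n + 1) / 2) (n + 1) (a ^ 2 / 2) /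
        (Real.Gamma (n + 1) * (2 : ℝ) ^ ((n - m + 1) / 2) * Real.exp (a ^ 2 / 2)) := by
    have h1 : ∑' l, g l = c * ∑' l, h l := by
      simp only [hg]; exact tsum_mul_left
    have h2 : ∑' l, h l = oneF₁ ((m+n+1)/2) (n+1) (a^2/2) := rfl
    rw [h1, h2, hc]
    have h3 : Real.exp (-a ^ 2 / 2) = (Real.exp (a ^ 2 / 2))⁻¹ := by
      rw [← Real.exp_neg]; ring_nf
    rw [h3]
    have h4 : Real.Gamma (n+1) ≠ 0 := (Real.Gamma_pos_of_pos hβ).ne'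
    have h5 : (2:ℝ)^((n-m+1)/2) ≠ 0 := by positivity
    have h6 : Real.exp (a^2/2) ≠ 0 := (Real.exp_pos _).ne'
    rw [eq_div_iff (mul_ne_zero (mul_ne_zero h4 h5) h6)]
    field_simp
  have htail := Summable.sum_add_tsum_nat_add (f := f) (p+1) hf_summ
  have hLHS : (∑' l : ℕ,
        a ^ (2 * (p + 1 + l)) * Real.exp (-a ^ 2 / 2) *
          uGamma ((m + n + 2 * ((p : ℝ) + 1 + (l : ℝ)) + 1) / 2) (b ^ 2 / 2) /
          (((p + 1 + l).factorial : ℝ) * Real.Gamma (n + ((p : ℝ) + 1 + (l : ℝ)) + 1) *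
            (2 : ℝ) ^ ((n - m + 2 * ((p : ℝ) + 1 + (l : ℝ)) + 1) / 2)))
      = ∑' l : ℕ, f (l + (p + 1)) := by
    apply tsum_congr
    intro l
    have hidx : l + (p + 1) = p + 1 + l := by ring
    rw [hidx]
    simp only [hf]
    push_cast
    ring_nf
  have hS : (∑ l ∈ Finset.range (p + 1),
        a ^ (2 * l) * Real.exp (-a ^ 2 / 2) *
          uGamma ((m + n + 2 * (l : ℝ) + 1) / 2) (b ^ 2 / 2) /
          ((l.factorial : ℝ) * Real.Gamma (n + (l : ℝ) + 1) *
            (2 : ℝ) ^ ((n - m + 2 * (l : ℝ) + 1) / 2)))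
      = ∑ l ∈ Finset.range (p + 1), f l := by
    apply Finset.sum_congr rfl
    intro l _
    simp only [hf]
  rw [hLHS, hS, ← hgsum]
  linarith
end
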